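/- If a vertex-colored digraph (G,σ) is the best match graph of a leaf-colored tree, i.e., (G,σ) = 𝔅(T,σ), then T displays every triple in the set R(G,σ) of informative triples of (G,σ) and displays no triple in the set F(G,σ) of forbidden triples of (G,σ). -/
import Mathlib


/-- A planted phylogenetic rooted tree, encoded by a parent function on a
finite vertex set.  The root `0_T` is a fixed point of `parent`; every vertex
reaches the root by iterating `parent`; the root has exactly one child
(`planted`); and every inner vertex (non-root vertex having a child) has at
least two children (`phylo`). -/
structure PPTree where
  V : Type
  [fintypeV : Fintype V]
  [decEqV : DecidableEq V]
  root : V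
  parent : V → V
  parent_root : parent root = root
  reach : ∀ v : V, ∃ n : ℕ, parent^[n] v = root
  planted : ∃! v : V, v ≠ root ∧ parent v = root
  phylo : ∀ v : V, v ≠ root → (∃ u, parent u = v ∧ u ≠ v) →
      ∃ u w, parent u = v ∧ parent w = v ∧ u ≠ w ∧ u ≠ v ∧ w ≠ v

attribute [instance] PPTree.fintypeV PPTree.decEqV

namespace PPTree

variable (T : PPTree)

/-- `T.le x y` means `x ⪯_T y`, i.e. `y` is an ancestor of `x` (or `x = y`). -/
def le (x y : T.V) : Prop := ∃ n : ℕ, T.parent^[n] x = y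

/-- `T.lt x y` means `x ≺_T y`. -/
def lt (x y : T.V) : Prop := T.le x y ∧ x ≠ y

/-- Leaves are the `⪯_T`-minimal vertices, i.e. vertices without children. -/
def isLeaf (v : T.V) : Prop := ∀ u, T.parent u = v → u = v

/-- Inner vertices: neither leaves nor the planted root. -/
def inner (v : T.V) : Prop := v ≠ T.root ∧ ¬ T.isLeaf v

/-- The last common ancestor of two vertices: the `⪯_T`-minimal common
ancestor. -/
noncomputable def lca (x y : T.V) : T.V :=
  @Classical.epsilon _ ⟨T.root⟩
    fun v => T.le x v ∧ T.le y v ∧ ∀ w, T.le x w → T.le y w → T.le v w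

/-- The last common ancestor of a set of vertices. -/
noncomputable def lcaSet (A : Set T.V) : T.V :=
  @Classical.epsilon _ ⟨T.root⟩
    fun v => (∀ a ∈ A, T.le a v) ∧ ∀ w, (∀ a ∈ A, T.le a w) → T.le v w

/-- `ρ_T`, the unique child of the planted root. -/
noncomputable def rho : T.V := T.planted.choose

theorem rho_ne_root : T.rho ≠ T.root := T.planted.choose_spec.1.1

/-- Edges of `T`, identified with their child endpoint: the vertex `v ≠ 0_T`
represents the edge `(parent v, v)`. -/
abbrev Edge := {v : T.V // v ≠ T.root}

/-- The union `V(T) ∪ E(T)`. -/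
abbrev VE := T.V ⊕ T.Edge

/-- The ancestor order `⪯_T` extended to `V(T) ∪ E(T)`: for an edge `e = uv`
(`u` the parent of `v`), `x ⪯ e` iff `x ⪯ v`, `e ⪯ x` iff `u ⪯ x`, and
`e ⪯ f` iff the child endpoints are comparable accordingly. -/
def leVE : T.VE → T.VE → Prop
  | Sum.inl x, Sum.inl y => T.le x y
  | Sum.inl x, Sum.inr e => T.le x e.1
  | Sum.inr e, Sum.inl y => T.le (T.parent e.1) y
  | Sum.inr e, Sum.inr f => T.le e.1 f.1

def ltVE (a b : T.VE) : Prop := T.leVE a b ∧ a ≠ b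

/-- Two elements of `V(T) ∪ E(T)` are comparable. -/
def cmpVE (a b : T.VE) : Prop := T.leVE a b ∨ T.leVE b a

/-- Membership in `L(T)` for elements of `V(T) ∪ E(T)`. -/
def isLeafVE : T.VE → Prop
  | Sum.inl v => T.isLeaf v
  | Sum.inr _ => False

/-- Map an element of `V(T) ∪ E(T)` to a vertex (an edge `uv` is sent to its
child endpoint `v`). -/
def toVertex : T.VE → T.V
  | Sum.inl v => v
  | Sum.inr e => e.1

end PPTree

/-- Axioms (R0)–(R3) of a reconciliation map `μ : V(T) → V(S) ∪ E(S)`. -/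
structure IsRecon (T S : PPTree) (μ : T.V → S.VE) : Prop where
  R0 : ∀ x, μ x = Sum.inl S.root ↔ x = T.root
  R1 : ∀ x, S.isLeafVE (μ x) ↔ T.isLeaf x
  R2 : ∀ x y, T.lt y x → (∃ u, μ x = Sum.inl u) → (∃ v, μ y = Sum.inl v) → μ x ≠ μ y
  R3 : ∀ x y, T.lt y x → ¬ S.ltVE (μ x) (μ y)

/-- A reconciliation is HGT-free if the images of the endpoints of every edge
of `T` are `⪯_S`-comparable. -/
def IsHGTFree (T S : PPTree) (μ : T.V → S.VE) : Prop :=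
  ∀ v : T.V, v ≠ T.root → S.cmpVE (μ (T.parent v)) (μ v)

/-- `(T,S,μ,σ)` is a σ-reconciliation when `μ` restricted to `L(T)` equals
`σ`. -/
def SigmaCompat (T S : PPTree) (μ : T.V → S.VE) (σ : T.V → S.V) : Prop :=
  ∀ x, T.isLeaf x → μ x = Sum.inl (σ x)

/-- A time map for `T`. -/
def IsTimeMap (T : PPTree) (τ : T.V → ℝ) : Prop :=
  ∀ x y, T.lt x y → τ x < τ y

/-- Axioms (S0)–(S3) of a relaxed scenario `(T,S,μ,τ_T,τ_S)`. -/
structure IsRelaxedScenario (T S : PPTree) (μ : T.V → S.VE)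
    (τT : T.V → ℝ) (τS : S.V → ℝ) : Prop where
  timeT : IsTimeMap T τT
  timeS : IsTimeMap S τS
  S0 : ∀ x, μ x = Sum.inl S.root ↔ x = T.root
  S1 : ∀ x, S.isLeafVE (μ x) ↔ T.isLeaf x
  S2 : ∀ x v, μ x = Sum.inl v → τS v = τT x
  S3 : ∀ x (e : S.Edge), μ x = Sum.inr e → τS e.1 < τT x ∧ τT x < τS (S.parent e.1)

/-- A planted phylogenetic tree whose leaf set is (identified with) the finite
type `L` via the embedding `emb`. -/
structure LeafTree (L : Type) [Fintype L] [DecidableEq L] extends PPTree where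
  emb : L → toPPTree.V
  emb_inj : Function.Injective emb
  emb_leaf : ∀ v : L, toPPTree.isLeaf (emb v)
  emb_surj : ∀ l, toPPTree.isLeaf l → ∃ v : L, emb v = l

/-- The tree `T` displays the rooted triple `ab|c`:
`lca(a,b) ≺ lca(a,c) = lca(b,c)`. -/
def displaysTriple (T : PPTree) (a b c : T.V) : Prop :=
  T.lt (T.lca a b) (T.lca a c) ∧ T.lca a c = T.lca b c

section BMG

variable {V Y : Type} [Fintype V] [DecidableEq V]

/-- `y` is a best match of `x` in the leaf-colored tree `(T,σ)`:
`σ(x) ≠ σ(y)` and `lca(x,y) ⪯ lca(x,y')` for all leaves `y'` of the same color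
as `y`. -/
def LeafTree.bestMatch (T : LeafTree V) (σ : V → Y) (x y : V) : Prop :=
  σ x ≠ σ y ∧ ∀ y' : V, σ y' = σ y →
    T.toPPTree.le (T.toPPTree.lca (T.emb x) (T.emb y))
      (T.toPPTree.lca (T.emb x) (T.emb y'))

/-- `(G,σ)` is the best match graph `𝔅(T,σ)` of the leaf-colored tree
`(T,σ)`. -/
def Explains (T : LeafTree V) (σ : V → Y) (G : V → V → Prop) : Prop :=
  ∀ x y : V, G x y ↔ T.bestMatch σ x y

/-- The triple `ab|b'` is informative for `(G,σ)`. -/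
def Informative (G : V → V → Prop) (σ : V → Y) (a b b' : V) : Prop :=
  a ≠ b ∧ a ≠ b' ∧ b ≠ b' ∧ σ a ≠ σ b ∧ σ b = σ b' ∧ G a b ∧ ¬ G a b'

/-- The triple `ab|b'` is forbidden for `(G,σ)`. -/
def Forbidden (G : V → V → Prop) (σ : V → Y) (a b b' : V) : Prop :=
  a ≠ b ∧ a ≠ b' ∧ b ≠ b' ∧ σ a ≠ σ b ∧ σ b = σ b' ∧ G a b ∧ G a b'

end BMG

namespace PPTree

variable (T : PPTree)

theorem le_refl' (x : T.V) : T.le x x := ⟨0, rfl⟩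

theorem le_trans' {x y z : T.V} (h1 : T.le x y) (h2 : T.le y z) : T.le x z := by
  obtain ⟨m, hm⟩ := h1; obtain ⟨n, hn⟩ := h2
  exact ⟨n + m, by rw [Function.iterate_add_apply, hm, hn]⟩

theorem iterate_root (n : ℕ) : T.parent^[n] T.root = T.root :=
  Function.iterate_fixed T.parent_root n

theorem eq_root_of_periodic {x : T.V} {p : ℕ} (hp : 0 < p)
    (hper : T.parent^[p] x = x) : x = T.root := by
  obtain ⟨k, hk⟩ := T.reach x
  have h2 : T.parent^[p * k] x = x := by
    rw [Function.iterate_mul]; exact Function.iterate_fixed hper k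
  have hge : k ≤ p * k := Nat.le_mul_of_pos_left k hp
  calc x = T.parent^[p * k] x := h2.symm
    _ = T.parent^[(p * k - k) + k] x := by rw [Nat.sub_add_cancel hge]
    _ = T.parent^[p * k - k] (T.parent^[k] x) := Function.iterate_add_apply ..
    _ = T.root := by rw [hk, T.iterate_root]

theorem le_antisymm' {x y : T.V} (h1 : T.le x y) (h2 : T.le y x) : x = y := by
  obtain ⟨m, hm⟩ := h1; obtain ⟨n, hn⟩ := h2
  rcases Nat.eq_zero_or_pos (n + m) with hz | hp
  · have hm0 : m = 0 := by omega
    rw [hm0] at hm; exact hm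
  · have hper : T.parent^[n + m] x = x := by
      rw [Function.iterate_add_apply, hm, hn]
    have hx : x = T.root := T.eq_root_of_periodic hp hper
    rw [hx] at hm ⊢
    rw [T.iterate_root] at hm
    exact hm

theorem le_comp {x u w : T.V} (h1 : T.le x u) (h2 : T.le x w) :
    T.le u w ∨ T.le w u := by
  obtain ⟨m, hm⟩ := h1; obtain ⟨n, hn⟩ := h2
  rcases le_total m n with hle | hle
  · exact Or.inl ⟨n - m, by
      rw [← hm, ← Function.iterate_add_apply, Nat.sub_add_cancel hle, hn]⟩
  · exact Or.inr ⟨m - n, by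
      rw [← hn, ← Function.iterate_add_apply, Nat.sub_add_cancel hle, hm]⟩

theorem exists_lca (x y : T.V) :
    ∃ v, T.le x v ∧ T.le y v ∧ ∀ w, T.le x w → T.le y w → T.le v w := by
  classical
  have hP : ∃ n, T.le y (T.parent^[n] x) := by
    obtain ⟨k, hk⟩ := T.reach x
    exact ⟨k, by rw [hk]; exact T.reach y⟩
  refine ⟨T.parent^[Nat.find hP] x, ⟨Nat.find hP, rfl⟩, Nat.find_spec hP, ?_⟩
  rintro w ⟨m, hm⟩ hyw
  have hPm : T.le y (T.parent^[m] x) := by rw [hm]; exact hyw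
  have hn : Nat.find hP ≤ m := Nat.find_min' hP hPm
  exact ⟨m - Nat.find hP, by
    rw [← Function.iterate_add_apply, Nat.sub_add_cancel hn, hm]⟩

theorem lca_spec (x y : T.V) :
    T.le x (T.lca x y) ∧ T.le y (T.lca x y) ∧
      ∀ w, T.le x w → T.le y w → T.le (T.lca x y) w :=
  Classical.epsilon_spec (T.exists_lca x y)

end PPTree

/-- If `(G,σ) = 𝔅(T,σ)` is the best match graph of a
leaf-colored tree `(T,σ)`, then `T` displays every informative triple of
`(G,σ)` and no forbidden triple of `(G,σ)`. -/
theorem bmg_displays_informative_not_forbidden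
    {V Y : Type} [Fintype V] [DecidableEq V]
    (T : LeafTree V) (σ : V → Y) (G : V → V → Prop)
    (h : Explains T σ G) :
    (∀ a b b' : V, Informative G σ a b b' →
        displaysTriple T.toPPTree (T.emb a) (T.emb b) (T.emb b')) ∧
    (∀ a b b' : V, Forbidden G σ a b b' →
        ¬ displaysTriple T.toPPTree (T.emb a) (T.emb b) (T.emb b')) := by
  constructor
  · rintro a b b' ⟨-, -, -, hσab, hσbb', hGab, hGab'⟩
    have hb := (h a b).mp hGab
    set P := T.toPPTree with hPdef
    set A := T.emb a
    set B := T.emb b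
    set B' := T.emb b'
    obtain ⟨hAu, hBu, humin⟩ := P.lca_spec A B
    obtain ⟨hAv, hB'v, hvmin⟩ := P.lca_spec A B'
    obtain ⟨hBw, hB'w, hwmin⟩ := P.lca_spec B B'
    set u := P.lca A B
    set v := P.lca A B'
    set w := P.lca B B'
    have huv : P.le u v := hb.2 b' hσbb'.symm
    have hne : u ≠ v := by
      intro he
      apply hGab'
      refine (h a b').mpr ⟨fun he2 => hσab (he2.trans hσbb'.symm), fun y' hy' => ?_⟩
      have he' : T.toPPTree.lca (T.emb a) (T.emb b)
          = T.toPPTree.lca (T.emb a) (T.emb b') := he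
      rw [← he']
      exact hb.2 y' (hy'.trans hσbb'.symm)
    have hwv : P.le w v := hwmin v (P.le_trans' hBu huv) hB'v
    have hvw : P.le v w := by
      rcases P.le_comp hBu hBw with hc | hc
      · exact hvmin w (P.le_trans' hAu hc) hB'w
      · exact absurd (P.le_antisymm' huv (hvmin u hAu (P.le_trans' hB'w hc))) hne
    exact ⟨⟨huv, hne⟩, P.le_antisymm' hvw hwv⟩
  · rintro a b b' ⟨-, -, -, -, hσbb', hGab, hGab'⟩ hd
    have hb := (h a b).mp hGab
    have hb' := (h a b').mp hGab'
    exact hd.1.2 (T.toPPTree.le_antisymm' (hb.2 b' hσbb'.symm) (hb'.2 b hσbb'))
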